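/- Let K ≥ 1 and γ_0 = 1, γ_1,…,γ_K real with γ_K ≠ 0, and let θ be a real zero of P(x) = Σ_{j=0}^K γ_j x^{K−j}. Define γ̃_j = Σ_{i=0}^j θ^i γ_{j−i} for 0 ≤ j ≤ K−1. Then for all n ≥ K, Σ_{j=0}^K γ_j L_{n−j}^α(x) = Σ_{j=0}^{K−1} γ̃_j L_{n−j}^{α−1}(x) − (1−θ) (d/dx)[Σ_{j=0}^{K−1} γ̃_j L_{n−j}^{α−1}(x)]. -/

import Mathlib

open Polynomial Finset

/-- The standard (generalized) Laguerre polynomial `L_n^α`. -/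
noncomputable def laguerre (α : ℝ) (n : ℕ) : Polynomial ℝ :=
  ∑ k ∈ Finset.range (n + 1),
    Polynomial.C ((-1 : ℝ) ^ k * (ascPochhammer ℝ (n - k)).eval (α + k + 1) /
      ((n - k).factorial * k.factorial)) * Polynomial.X ^ k

/-- The monic Laguerre polynomial `L̂_n^α = (-1)^n n! L_n^α`. -/
noncomputable def monicLaguerre (α : ℝ) (n : ℕ) : Polynomial ℝ :=
  Polynomial.C ((-1 : ℝ) ^ n * n.factorial) * laguerre α n

/-- The Laguerre polynomial normalized to take the value 1 at 0:
`𝔏_n^α = (n!/(1+α)_n) L_n^α`. -/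
noncomputable def laguerreOne (α : ℝ) (n : ℕ) : Polynomial ℝ :=
  Polynomial.C ((n.factorial : ℝ) / (ascPochhammer ℝ n).eval (1 + α)) * laguerre α n

/-- The Brenke normalization `ℓ_n^α = L_n^α/(1+α)_n`. -/
noncomputable def laguerreBrenke (α : ℝ) (n : ℕ) : Polynomial ℝ :=
  Polynomial.C (1 / (ascPochhammer ℝ n).eval (1 + α)) * laguerre α n


lemma laguerre_coeff (α : ℝ) (n k : ℕ) :
    (laguerre α n).coeff k = if k ≤ n then
      (-1 : ℝ) ^ k * (ascPochhammer ℝ (n - k)).eval (α + k + 1) /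
        ((n - k).factorial * k.factorial) else 0 := by
  unfold laguerre
  rw [finset_sum_coeff]
  simp only [coeff_C_mul, coeff_X_pow, mul_ite, mul_one, mul_zero]
  rw [Finset.sum_ite_eq (Finset.range (n+1))]
  simp [Nat.lt_succ_iff]

lemma asc_left (m : ℕ) (a : ℝ) :
    (ascPochhammer ℝ (m+1)).eval a = a * (ascPochhammer ℝ m).eval (a+1) := by
  rw [ascPochhammer_succ_left, eval_mul, eval_X, eval_comp, eval_add, eval_X, eval_one]

lemma lagA (α : ℝ) (n : ℕ) :
    laguerre α n = laguerre (α-1) n - Polynomial.derivative (laguerre (α-1) n) := by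
  ext k
  simp only [coeff_sub, coeff_derivative, laguerre_coeff]
  by_cases hk : k ≤ n
  · rcases eq_or_lt_of_le hk with rfl | hk'
    · have h1 : ¬ (k+1 ≤ k) := by omega
      simp [h1, Nat.sub_self]
    · obtain ⟨m, rfl⟩ : ∃ m, n = k + (m+1) := ⟨n - k - 1, by omega⟩
      have h1 : k ≤ k+(m+1) := by omega
      have h2 : k+1 ≤ k+(m+1) := by omega
      rw [if_pos h1, if_pos h1, if_pos h2]
      have e1 : k + (m+1) - k = m+1 := by omega
      have e2 : k + (m+1) - (k+1) = m := by omega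
      rw [e1, e2]
      have l1 : (ascPochhammer ℝ (m+1)).eval (α + k + 1)
          = (ascPochhammer ℝ m).eval (α + k + 1) * (α + k + 1 + m) :=
        ascPochhammer_succ_eval m _
      have l2 : (ascPochhammer ℝ (m+1)).eval (α - 1 + k + 1)
          = (α + k) * (ascPochhammer ℝ m).eval (α + k + 1) := by
        rw [show (α - 1 + k + 1 : ℝ) = α + k by ring, asc_left]
      have l3 : (α - 1 + ((k:ℝ)+1) + 1 : ℝ) = α + k + 1 := by ring
      push_cast
      rw [l1, l2, l3]
      have fk : (k.factorial : ℝ) > 0 := by positivity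
      have fm : (m.factorial : ℝ) > 0 := by positivity
      rw [Nat.factorial_succ (m), Nat.factorial_succ (k)]
      push_cast
      field_simp
      ring
  · have h2 : ¬ (k+1 ≤ n) := by omega
    simp [hk, h2]

lemma lagB (β : ℝ) (n : ℕ) :
    Polynomial.derivative (laguerre β (n+1))
      = Polynomial.derivative (laguerre β n) - laguerre β n := by
  ext k
  simp only [coeff_sub, coeff_derivative, laguerre_coeff]
  by_cases hk : k ≤ n
  · rcases eq_or_lt_of_le hk with rfl | hk'
    · have h1 : k+1 ≤ k+1 := le_refl _
      have h2 : ¬ (k+1 ≤ k) := by omega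
      rw [if_pos h1, if_neg h2, if_pos (le_refl k)]
      simp only [Nat.add_sub_cancel, Nat.sub_self, ascPochhammer_zero, eval_one,
        Nat.factorial_zero]
      rw [Nat.factorial_succ k]
      push_cast
      have fk : (k.factorial : ℝ) > 0 := by positivity
      field_simp
      ring
    · obtain ⟨m, rfl⟩ : ∃ m, n = k + (m+1) := ⟨n - k - 1, by omega⟩
      have h1 : k+1 ≤ k+(m+1)+1 := by omega
      have h2 : k+1 ≤ k+(m+1) := by omega
      have h3 : k ≤ k+(m+1) := by omega
      rw [if_pos h1, if_pos h2, if_pos h3]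
      have e1 : k+(m+1)+1 - (k+1) = m+1 := by omega
      have e2 : k+(m+1) - (k+1) = m := by omega
      have e3 : k+(m+1) - k = m+1 := by omega
      rw [e1, e2, e3]
      have l1 : (ascPochhammer ℝ (m+1)).eval (β + (k+1) + 1)
          = (ascPochhammer ℝ m).eval (β + (k+1) + 1) * (β + (k+1) + 1 + m) :=
        ascPochhammer_succ_eval m _
      have l2 : (ascPochhammer ℝ (m+1)).eval (β + k + 1)
          = (β + k + 1) * (ascPochhammer ℝ m).eval (β + (k+1) + 1) := by
        rw [asc_left]; ring_nf
      push_cast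
      rw [l1, l2]
      rw [Nat.factorial_succ (m), Nat.factorial_succ (k)]
      push_cast
      have fk : (k.factorial : ℝ) > 0 := by positivity
      have fm : (m.factorial : ℝ) > 0 := by positivity
      field_simp
      ring
  · have h1 : ¬ (k+1 ≤ n+1) := by omega
    have h2 : ¬ (k+1 ≤ n) := by omega
    simp [hk, h1, h2]

/-- Decomposition of `q_n^{α;γ} = Σ_{j=0}^K γ_j L_{n-j}^α` associated to a real zero `θ`
of `P(x) = Σ_{j=0}^K γ_j x^{K-j}`: with `γ̃_j = Σ_{i=0}^j θ^i γ_{j-i}`,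
`q_n^{α;γ} = q_n^{α-1;γ̃} - (1-θ) (q_n^{α-1;γ̃})'` for all `n ≥ K`. -/
theorem stmt_16 (α : ℝ) (K : ℕ) (hK : 1 ≤ K) (γ : ℕ → ℝ)
    (hγ0 : γ 0 = 1) (hγK : γ K ≠ 0) (θ : ℝ)
    (hθ : (∑ j ∈ Finset.range (K + 1),
        Polynomial.C (γ j) * Polynomial.X ^ (K - j)).eval θ = 0) :
    ∀ n, K ≤ n →
      ∑ j ∈ Finset.range (K + 1), Polynomial.C (γ j) * laguerre α (n - j)
        = (∑ j ∈ Finset.range K,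
            Polynomial.C (∑ i ∈ Finset.range (j + 1), θ ^ i * γ (j - i)) *
              laguerre (α - 1) (n - j))
          - Polynomial.C (1 - θ) * Polynomial.derivative
            (∑ j ∈ Finset.range K,
              Polynomial.C (∑ i ∈ Finset.range (j + 1), θ ^ i * γ (j - i)) *
                laguerre (α - 1) (n - j)) := by
  intro n hn
  set g : ℕ → ℝ := fun j => ∑ i ∈ Finset.range (j+1), θ^i * γ (j-i) with hg
  set q := ∑ j ∈ Finset.range K,
      Polynomial.C (∑ i ∈ Finset.range (j + 1), θ ^ i * γ (j - i)) *
        laguerre (α - 1) (n - j) with hq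
  have hq' : q = ∑ j ∈ Finset.range K, C (g j) * laguerre (α-1) (n-j) := hq
  set r := ∑ j ∈ Finset.range K, C (g j) * laguerre (α-1) (n-1-j) with hr
  have hgK : g K = 0 := by
    have h := hθ
    simp only [eval_finset_sum, eval_mul, eval_C, eval_pow, eval_X] at h
    rw [← Finset.sum_range_reflect] at h
    simp only [hg]
    rw [← h]
    apply Finset.sum_congr rfl
    intro j hj
    simp only [Finset.mem_range] at hj
    have e1 : K + 1 - 1 - j = K - j := by omega
    have e2 : K - (K - j) = j := by omega
    rw [e1, e2, mul_comm]
  have hrec : ∀ j, g (j+1) = γ (j+1) + θ * g j := by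
    intro j
    simp only [hg]
    rw [Finset.sum_range_succ']
    simp only [pow_zero, one_mul, Nat.sub_zero, Finset.mul_sum]
    rw [add_comm]
    congr 1
    apply Finset.sum_congr rfl
    intro i hi
    have e : j + 1 - (i+1) = j - i := by omega
    rw [e, pow_succ']
    ring
  have hS : ∑ j ∈ Finset.range (K+1), C (γ j) * laguerre (α-1) (n-j)
      = q - C θ * r := by
    rw [Finset.sum_range_succ' (fun j => C (γ j) * laguerre (α-1) (n-j)) K]
    have h1 : ∀ j ∈ Finset.range K,
        C (γ (j+1)) * laguerre (α-1) (n-(j+1))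
          = C (g (j+1)) * laguerre (α-1) (n-(j+1))
            - C θ * (C (g j) * laguerre (α-1) (n-1-j)) := by
      intro j hj
      have hγ : γ (j+1) = g (j+1) - θ * g j := by rw [hrec j]; ring
      have e : n - (j+1) = n - 1 - j := by omega
      rw [hγ, map_sub, map_mul, sub_mul, e]
      ring
    rw [Finset.sum_congr rfl h1, Finset.sum_sub_distrib, ← Finset.mul_sum, ← hr]
    have h2 : (∑ j ∈ Finset.range K, C (g (j+1)) * laguerre (α-1) (n-(j+1)))
        + C (γ 0) * laguerre (α-1) (n-0) = q := by
      have hg0 : C (γ 0) = C (g 0) := by simp [hg]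
      rw [hg0, ← Finset.sum_range_succ' (fun j => C (g j) * laguerre (α-1) (n-j)) K,
        Finset.sum_range_succ, hgK, hq']
      simp
    linear_combination h2
  have hD : Polynomial.derivative q = Polynomial.derivative r - r := by
    rw [hq', hr, derivative_sum, derivative_sum, ← Finset.sum_sub_distrib]
    apply Finset.sum_congr rfl
    intro j hj
    simp only [Finset.mem_range] at hj
    have e : n - j = (n - 1 - j) + 1 := by omega
    rw [derivative_C_mul, derivative_C_mul, e, lagB]
    ring
  have hA : ∀ j ∈ Finset.range (K+1),
      C (γ j) * laguerre α (n-j)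
        = C (γ j) * laguerre (α-1) (n-j)
          - C (γ j) * Polynomial.derivative (laguerre (α-1) (n-j)) := by
    intro j _
    rw [lagA α (n-j)]
    ring
  calc ∑ j ∈ Finset.range (K + 1), C (γ j) * laguerre α (n - j)
      = (∑ j ∈ Finset.range (K+1), C (γ j) * laguerre (α-1) (n-j))
          - Polynomial.derivative (∑ j ∈ Finset.range (K+1),
              C (γ j) * laguerre (α-1) (n-j)) := by
        rw [Finset.sum_congr rfl hA, Finset.sum_sub_distrib, derivative_sum]
        refine congrArg (HSub.hSub _) ?_
        exact Finset.sum_congr rfl fun j _ => (derivative_C_mul _ _).symm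
    _ = (q - C θ * r) - Polynomial.derivative (q - C θ * r) := by rw [hS]
    _ = q - C (1 - θ) * Polynomial.derivative q := by
        rw [derivative_sub, derivative_C_mul]
        have hDr : Polynomial.derivative r = Polynomial.derivative q + r := by
          rw [hD]; ring
        rw [hDr, map_sub, map_one]
        ring
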